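/- (1) The unital associative ℤ[a,b,c]-algebra presented by generators s₁, s₂ and relations s₁s₂s₁ = s₂s₁s₂ and sᵢ³ = a·sᵢ² + b·sᵢ + c for i ∈ {1,2} is not finitely generated as a ℤ[a,b,c]-module. (2) In the specialization a = b = 0, i.e. in the unital associative ℤ[c]-algebra A₀ presented by generators s₁, s₂ and relations s₁s₂s₁ = s₂s₁s₂, s₁³ = c, s₂³ = c, the element (s₁²s₂²)⁶ − c⁸ is a nonzero torsion element: c·((s₁²s₂²)⁶ − c⁸) = 0 in A₀ but (s₁²s₂²)⁶ − c⁸ ≠ 0 in A₀. -/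

import Mathlib

noncomputable section

open MvPolynomial Polynomial

/-- The polynomial ring ℤ[a,b,c], with a = X 0, b = X 1, c = X 2. -/
abbrev P3 : Type := MvPolynomial (Fin 3) ℤ

/-- The relations s₁s₂s₁ = s₂s₁s₂ and sᵢ³ = a·sᵢ² + b·sᵢ + c over ℤ[a,b,c]
(s₁ = ι 0, s₂ = ι 1). -/
inductive Rel16a : FreeAlgebra P3 (Fin 2) → FreeAlgebra P3 (Fin 2) → Prop
  | braid : Rel16a (FreeAlgebra.ι P3 0 * FreeAlgebra.ι P3 1 * FreeAlgebra.ι P3 0)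
      (FreeAlgebra.ι P3 1 * FreeAlgebra.ι P3 0 * FreeAlgebra.ι P3 1)
  | cube1 : Rel16a (FreeAlgebra.ι P3 0 ^ 3)
      (algebraMap P3 _ (X 0) * FreeAlgebra.ι P3 0 ^ 2
        + algebraMap P3 _ (X 1) * FreeAlgebra.ι P3 0 + algebraMap P3 _ (X 2))
  | cube2 : Rel16a (FreeAlgebra.ι P3 1 ^ 3)
      (algebraMap P3 _ (X 0) * FreeAlgebra.ι P3 1 ^ 2
        + algebraMap P3 _ (X 1) * FreeAlgebra.ι P3 1 + algebraMap P3 _ (X 2))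

/-- The specialization a = b = 0: relations s₁s₂s₁ = s₂s₁s₂, s₁³ = c, s₂³ = c over ℤ[c]. -/
inductive Rel16b : FreeAlgebra ℤ[X] (Fin 2) → FreeAlgebra ℤ[X] (Fin 2) → Prop
  | braid : Rel16b (FreeAlgebra.ι ℤ[X] 0 * FreeAlgebra.ι ℤ[X] 1 * FreeAlgebra.ι ℤ[X] 0)
      (FreeAlgebra.ι ℤ[X] 1 * FreeAlgebra.ι ℤ[X] 0 * FreeAlgebra.ι ℤ[X] 1)
  | cube1 : Rel16b (FreeAlgebra.ι ℤ[X] 0 ^ 3) (algebraMap ℤ[X] _ Polynomial.X)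
  | cube2 : Rel16b (FreeAlgebra.ι ℤ[X] 1 ^ 3) (algebraMap ℤ[X] _ Polynomial.X)

/-- The image of s₁ in A₀. -/
def A0s1 : RingQuot Rel16b := RingQuot.mkAlgHom ℤ[X] Rel16b (FreeAlgebra.ι ℤ[X] 0)
/-- The image of s₂ in A₀. -/
def A0s2 : RingQuot Rel16b := RingQuot.mkAlgHom ℤ[X] Rel16b (FreeAlgebra.ι ℤ[X] 1)
/-- The image of c in A₀. -/
def A0c : RingQuot Rel16b := algebraMap ℤ[X] (RingQuot Rel16b) Polynomial.X

namespace Scratch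
abbrev A0 := RingQuot Rel16b
def gen : Fin 2 → A0 := fun i => if i = 0 then A0s1 else A0s2
def ev (l : List (Fin 2)) : A0 := (l.map gen).prod

lemma hbraid : A0s1 * A0s2 * A0s1 = A0s2 * A0s1 * A0s2 := by
  simpa only [map_mul, A0s1, A0s2] using RingQuot.mkAlgHom_rel ℤ[X] Rel16b.braid

lemma hc1 : A0s1 ^ 3 = A0c := by
  simpa only [map_pow, AlgHom.commutes, A0s1, A0c] using RingQuot.mkAlgHom_rel ℤ[X] Rel16b.cube1
lemma hc2 : A0s2 ^ 3 = A0c := by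
  simpa only [map_pow, AlgHom.commutes, A0s2, A0c] using RingQuot.mkAlgHom_rel ℤ[X] Rel16b.cube2

lemma hcomm (z : A0) : A0c * z = z * A0c := (Algebra.commutes Polynomial.X z : _)

lemma ev_append (x y : List (Fin 2)) : ev (x ++ y) = ev x * ev y := by
  simp [ev, List.map_append, List.prod_append]

lemma braid_step (x y : List (Fin 2)) :
    ev (x ++ 0 :: 1 :: 0 :: y) = ev (x ++ 1 :: 0 :: 1 :: y) := by
  have h : ev (0 :: 1 :: 0 :: y) = ev (1 :: 0 :: 1 :: y) := by
    simp only [ev, List.map_cons, List.prod_cons, gen]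
    norm_num
    rw [← mul_assoc, ← mul_assoc, hbraid, mul_assoc, mul_assoc]
  rw [ev_append, ev_append, h]

lemma del1 (x y : List (Fin 2)) :
    ev (x ++ 0 :: 0 :: 0 :: y) = A0c * ev (x ++ y) := by
  have h : ev (0 :: 0 :: 0 :: y) = A0c * ev y := by
    simp only [ev, List.map_cons, List.prod_cons, gen]
    norm_num
    rw [← mul_assoc, ← mul_assoc, show A0s1 * A0s1 * A0s1 = A0c by rw [← hc1, pow_succ, pow_two]]
  rw [ev_append, ev_append, h, ← mul_assoc, ← hcomm, mul_assoc]

lemma del2 (x y : List (Fin 2)) :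
    ev (x ++ 1 :: 1 :: 1 :: y) = A0c * ev (x ++ y) := by
  have h : ev (1 :: 1 :: 1 :: y) = A0c * ev y := by
    simp only [ev, List.map_cons, List.prod_cons, gen]
    norm_num
    rw [← mul_assoc, ← mul_assoc, show A0s2 * A0s2 * A0s2 = A0c by rw [← hc2, pow_succ, pow_two]]
  rw [ev_append, ev_append, h, ← mul_assoc, ← hcomm, mul_assoc]

lemma key : A0c * ev [0, 0, 1, 1, 0, 0, 1, 1, 0, 0, 1, 1, 0, 0, 1, 1, 0, 0, 1, 1, 0, 0, 1, 1] = A0c ^ 9 := by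
  calc A0c * ev [0, 0, 1, 1, 0, 0, 1, 1, 0, 0, 1, 1, 0, 0, 1, 1, 0, 0, 1, 1, 0, 0, 1, 1] = A0c ^ 1 * ev [0, 0, 1, 1, 0, 0, 1, 1, 0, 0, 1, 1, 0, 0, 1, 1, 0, 0, 1, 1, 0, 0, 1, 1] := by rw [pow_one]
    _ = A0c ^ 0 * ev [0, 1, 1, 1, 0, 1, 1, 0, 0, 1, 1, 0, 0, 1, 1, 0, 0, 1, 1, 0, 0, 1, 1, 0, 0, 1, 1] := by rw [show ev ([0, 1, 1, 1, 0, 1, 1, 0, 0, 1, 1, 0, 0, 1, 1, 0, 0, 1, 1, 0, 0, 1, 1, 0, 0, 1, 1] : List (Fin 2)) = A0c * ev [0, 0, 1, 1, 0, 0, 1, 1, 0, 0, 1, 1, 0, 0, 1, 1, 0, 0, 1, 1, 0, 0, 1, 1] from by simpa using del2 ([0] : List (Fin 2)) [0, 1, 1, 0, 0, 1, 1, 0, 0, 1, 1, 0, 0, 1, 1, 0, 0, 1, 1, 0, 0, 1, 1], ← mul_assoc, ← pow_succ]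
    _ = A0c ^ 0 * ev [0, 1, 1, 0, 1, 0, 1, 0, 0, 1, 1, 0, 0, 1, 1, 0, 0, 1, 1, 0, 0, 1, 1, 0, 0, 1, 1] := by rw [show ev ([0, 1, 1, 1, 0, 1, 1, 0, 0, 1, 1, 0, 0, 1, 1, 0, 0, 1, 1, 0, 0, 1, 1, 0, 0, 1, 1] : List (Fin 2)) = ev [0, 1, 1, 0, 1, 0, 1, 0, 0, 1, 1, 0, 0, 1, 1, 0, 0, 1, 1, 0, 0, 1, 1, 0, 0, 1, 1] from by simpa using (braid_step ([0, 1, 1] : List (Fin 2)) [1, 0, 0, 1, 1, 0, 0, 1, 1, 0, 0, 1, 1, 0, 0, 1, 1, 0, 0, 1, 1]).symm]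
    _ = A0c ^ 0 * ev [0, 1, 1, 0, 0, 1, 0, 0, 0, 1, 1, 0, 0, 1, 1, 0, 0, 1, 1, 0, 0, 1, 1, 0, 0, 1, 1] := by rw [show ev ([0, 1, 1, 0, 1, 0, 1, 0, 0, 1, 1, 0, 0, 1, 1, 0, 0, 1, 1, 0, 0, 1, 1, 0, 0, 1, 1] : List (Fin 2)) = ev [0, 1, 1, 0, 0, 1, 0, 0, 0, 1, 1, 0, 0, 1, 1, 0, 0, 1, 1, 0, 0, 1, 1, 0, 0, 1, 1] from by simpa using (braid_step ([0, 1, 1, 0] : List (Fin 2)) [0, 0, 1, 1, 0, 0, 1, 1, 0, 0, 1, 1, 0, 0, 1, 1, 0, 0, 1, 1]).symm]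
    _ = A0c ^ 1 * ev [0, 1, 1, 0, 0, 1, 1, 1, 0, 0, 1, 1, 0, 0, 1, 1, 0, 0, 1, 1, 0, 0, 1, 1] := by rw [show ev ([0, 1, 1, 0, 0, 1, 0, 0, 0, 1, 1, 0, 0, 1, 1, 0, 0, 1, 1, 0, 0, 1, 1, 0, 0, 1, 1] : List (Fin 2)) = A0c * ev [0, 1, 1, 0, 0, 1, 1, 1, 0, 0, 1, 1, 0, 0, 1, 1, 0, 0, 1, 1, 0, 0, 1, 1] from by simpa using del1 ([0, 1, 1, 0, 0, 1] : List (Fin 2)) [1, 1, 0, 0, 1, 1, 0, 0, 1, 1, 0, 0, 1, 1, 0, 0, 1, 1], ← mul_assoc, ← pow_succ]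
    _ = A0c ^ 2 * ev [0, 1, 1, 0, 0, 0, 0, 1, 1, 0, 0, 1, 1, 0, 0, 1, 1, 0, 0, 1, 1] := by rw [show ev ([0, 1, 1, 0, 0, 1, 1, 1, 0, 0, 1, 1, 0, 0, 1, 1, 0, 0, 1, 1, 0, 0, 1, 1] : List (Fin 2)) = A0c * ev [0, 1, 1, 0, 0, 0, 0, 1, 1, 0, 0, 1, 1, 0, 0, 1, 1, 0, 0, 1, 1] from by simpa using del2 ([0, 1, 1, 0, 0] : List (Fin 2)) [0, 0, 1, 1, 0, 0, 1, 1, 0, 0, 1, 1, 0, 0, 1, 1], ← mul_assoc, ← pow_succ]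
    _ = A0c ^ 3 * ev [0, 1, 1, 0, 1, 1, 0, 0, 1, 1, 0, 0, 1, 1, 0, 0, 1, 1] := by rw [show ev ([0, 1, 1, 0, 0, 0, 0, 1, 1, 0, 0, 1, 1, 0, 0, 1, 1, 0, 0, 1, 1] : List (Fin 2)) = A0c * ev [0, 1, 1, 0, 1, 1, 0, 0, 1, 1, 0, 0, 1, 1, 0, 0, 1, 1] from by simpa using del1 ([0, 1, 1] : List (Fin 2)) [0, 1, 1, 0, 0, 1, 1, 0, 0, 1, 1, 0, 0, 1, 1], ← mul_assoc, ← pow_succ]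
    _ = A0c ^ 3 * ev [0, 1, 0, 1, 0, 1, 0, 0, 1, 1, 0, 0, 1, 1, 0, 0, 1, 1] := by rw [show ev ([0, 1, 1, 0, 1, 1, 0, 0, 1, 1, 0, 0, 1, 1, 0, 0, 1, 1] : List (Fin 2)) = ev [0, 1, 0, 1, 0, 1, 0, 0, 1, 1, 0, 0, 1, 1, 0, 0, 1, 1] from by simpa using (braid_step ([0, 1] : List (Fin 2)) [1, 0, 0, 1, 1, 0, 0, 1, 1, 0, 0, 1, 1]).symm]
    _ = A0c ^ 3 * ev [1, 0, 1, 1, 0, 1, 0, 0, 1, 1, 0, 0, 1, 1, 0, 0, 1, 1] := by rw [show ev ([0, 1, 0, 1, 0, 1, 0, 0, 1, 1, 0, 0, 1, 1, 0, 0, 1, 1] : List (Fin 2)) = ev [1, 0, 1, 1, 0, 1, 0, 0, 1, 1, 0, 0, 1, 1, 0, 0, 1, 1] from by simpa using braid_step ([] : List (Fin 2)) [1, 0, 1, 0, 0, 1, 1, 0, 0, 1, 1, 0, 0, 1, 1]]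
    _ = A0c ^ 3 * ev [1, 0, 1, 0, 1, 0, 0, 0, 1, 1, 0, 0, 1, 1, 0, 0, 1, 1] := by rw [show ev ([1, 0, 1, 1, 0, 1, 0, 0, 1, 1, 0, 0, 1, 1, 0, 0, 1, 1] : List (Fin 2)) = ev [1, 0, 1, 0, 1, 0, 0, 0, 1, 1, 0, 0, 1, 1, 0, 0, 1, 1] from by simpa using (braid_step ([1, 0, 1] : List (Fin 2)) [0, 0, 1, 1, 0, 0, 1, 1, 0, 0, 1, 1]).symm]
    _ = A0c ^ 4 * ev [1, 0, 1, 0, 1, 1, 1, 0, 0, 1, 1, 0, 0, 1, 1] := by rw [show ev ([1, 0, 1, 0, 1, 0, 0, 0, 1, 1, 0, 0, 1, 1, 0, 0, 1, 1] : List (Fin 2)) = A0c * ev [1, 0, 1, 0, 1, 1, 1, 0, 0, 1, 1, 0, 0, 1, 1] from by simpa using del1 ([1, 0, 1, 0, 1] : List (Fin 2)) [1, 1, 0, 0, 1, 1, 0, 0, 1, 1], ← mul_assoc, ← pow_succ]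
    _ = A0c ^ 5 * ev [1, 0, 1, 0, 0, 0, 1, 1, 0, 0, 1, 1] := by rw [show ev ([1, 0, 1, 0, 1, 1, 1, 0, 0, 1, 1, 0, 0, 1, 1] : List (Fin 2)) = A0c * ev [1, 0, 1, 0, 0, 0, 1, 1, 0, 0, 1, 1] from by simpa using del2 ([1, 0, 1, 0] : List (Fin 2)) [0, 0, 1, 1, 0, 0, 1, 1], ← mul_assoc, ← pow_succ]
    _ = A0c ^ 6 * ev [1, 0, 1, 1, 1, 0, 0, 1, 1] := by rw [show ev ([1, 0, 1, 0, 0, 0, 1, 1, 0, 0, 1, 1] : List (Fin 2)) = A0c * ev [1, 0, 1, 1, 1, 0, 0, 1, 1] from by simpa using del1 ([1, 0, 1] : List (Fin 2)) [1, 1, 0, 0, 1, 1], ← mul_assoc, ← pow_succ]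
    _ = A0c ^ 7 * ev [1, 0, 0, 0, 1, 1] := by rw [show ev ([1, 0, 1, 1, 1, 0, 0, 1, 1] : List (Fin 2)) = A0c * ev [1, 0, 0, 0, 1, 1] from by simpa using del2 ([1, 0] : List (Fin 2)) [0, 0, 1, 1], ← mul_assoc, ← pow_succ]
    _ = A0c ^ 8 * ev [1, 1, 1] := by rw [show ev ([1, 0, 0, 0, 1, 1] : List (Fin 2)) = A0c * ev [1, 1, 1] from by simpa using del1 ([1] : List (Fin 2)) [1, 1], ← mul_assoc, ← pow_succ]
    _ = A0c ^ 9 * ev [] := by rw [show ev ([1, 1, 1] : List (Fin 2)) = A0c * ev [] from by simpa using del2 ([] : List (Fin 2)) [], ← mul_assoc, ← pow_succ]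
    _ = A0c ^ 9 := by simp [ev]

lemma hW : (A0s1 ^ 2 * A0s2 ^ 2) ^ 6 = ev [0, 0, 1, 1, 0, 0, 1, 1, 0, 0, 1, 1, 0, 0, 1, 1, 0, 0, 1, 1, 0, 0, 1, 1] := by
  simp [ev, gen, pow_succ, mul_assoc]

lemma part2 : A0c * ((A0s1 ^ 2 * A0s2 ^ 2) ^ 6 - A0c ^ 8) = 0 := by
  have h := mul_sub A0c ((A0s1 ^ 2 * A0s2 ^ 2) ^ 6) (A0c ^ 8)
  rw [h, hW, key, ← pow_succ']
  exact sub_self _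

end Scratch


namespace G4Aux
abbrev W : Type := MvPolynomial Unit ℤ
abbrev M4 : Type := Matrix (Fin 4) (Fin 4) W
def y : W := MvPolynomial.X ()

def Sm : M4 := !![0,0,0,y; 0,0,0,0; 0,0,0,0; 0,0,1,0]
def Tm : M4 := !![0,0,0,0; 1,0,0,0; 0,1,0,0; 0,0,0,0]
def Pm : M4 := !![1,0,0,0; 0,0,0,0; 0,0,0,0; 0,0,0,0]

lemma hS3 : Sm ^ 3 = 0 := by
  rw [pow_succ, pow_two]
  refine Matrix.ext fun i j => ?_
  fin_cases i <;> fin_cases j <;>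
    simp [Sm, Matrix.mul_apply, Fin.sum_univ_four, Matrix.vecHead, Matrix.vecTail]

lemma hT3 : Tm ^ 3 = 0 := by
  rw [pow_succ, pow_two]
  refine Matrix.ext fun i j => ?_
  fin_cases i <;> fin_cases j <;>
    simp [Tm, Matrix.mul_apply, Fin.sum_univ_four, Matrix.vecHead, Matrix.vecTail]

lemma hSTS : Sm * Tm * Sm = 0 := by
  refine Matrix.ext fun i j => ?_
  fin_cases i <;> fin_cases j <;>
    simp [Sm, Tm, Matrix.mul_apply, Fin.sum_univ_four, Matrix.vecHead, Matrix.vecTail]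

lemma hTST : Tm * Sm * Tm = 0 := by
  refine Matrix.ext fun i j => ?_
  fin_cases i <;> fin_cases j <;>
    simp [Sm, Tm, Matrix.mul_apply, Fin.sum_univ_four, Matrix.vecHead, Matrix.vecTail]

lemma hSS : Sm * Sm = !![0,0,y,0; 0,0,0,0; 0,0,0,0; 0,0,0,0] := by
  refine Matrix.ext fun i j => ?_
  fin_cases i <;> fin_cases j <;>
    simp [Sm, Matrix.mul_apply, Fin.sum_univ_four, Matrix.vecHead, Matrix.vecTail]

lemma hTT : Tm * Tm = !![0,0,0,0; 0,0,0,0; (1:W),0,0,0; 0,0,0,0] := by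
  refine Matrix.ext fun i j => ?_
  fin_cases i <;> fin_cases j <;>
    simp [Tm, Matrix.mul_apply, Fin.sum_univ_four, Matrix.vecHead, Matrix.vecTail]

lemma hq' : Sm ^ 2 * Tm ^ 2 = !![y,0,0,0; 0,0,0,0; 0,0,0,0; 0,0,0,0] := by
  rw [pow_two, pow_two, hSS, hTT]
  refine Matrix.ext fun i j => ?_
  fin_cases i <;> fin_cases j <;>
    simp [Matrix.mul_apply, Fin.sum_univ_four, Matrix.vecHead, Matrix.vecTail]

lemma hsmulP : y • Pm = !![y,0,0,0; 0,0,0,0; 0,0,0,0; 0,0,0,0] := by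
  refine Matrix.ext fun i j => ?_
  fin_cases i <;> fin_cases j <;>
    simp [Pm, Matrix.smul_apply, Matrix.vecHead, Matrix.vecTail]

lemma hq : Sm ^ 2 * Tm ^ 2 = y • Pm := by rw [hq', hsmulP]

lemma hPP : Pm * Pm = Pm := by
  refine Matrix.ext fun i j => ?_
  fin_cases i <;> fin_cases j <;>
    simp [Pm, Matrix.mul_apply, Fin.sum_univ_four, Matrix.vecHead, Matrix.vecTail]

lemma hPpow : ∀ n, Pm ^ (n + 1) = Pm
  | 0 => pow_one Pm
  | n + 1 => by rw [pow_succ, hPpow n, hPP]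

lemma hq00 (n : ℕ) : ((Sm ^ 2 * Tm ^ 2) ^ n) 0 0 = y ^ n := by
  cases n with
  | zero => simp
  | succ n =>
      rw [hq, _root_.smul_pow, hPpow, Matrix.smul_apply]
      simp [Pm, smul_eq_mul]

/-! ## the representation of A₀ (part 3) -/

def algB : Algebra ℤ[X] M4 :=
  RingHom.toAlgebra' ((Int.castRingHom M4).comp (Polynomial.evalRingHom (0:ℤ)))
    (fun c x => (Int.cast_commute _ x).eq)

attribute [local instance] algB

lemma algB_apply (p : ℤ[X]) :
    algebraMap ℤ[X] M4 p = ((Polynomial.eval 0 p : ℤ) : M4) := rfl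

def fb : FreeAlgebra ℤ[X] (Fin 2) →ₐ[ℤ[X]] M4 := FreeAlgebra.lift ℤ[X] ![Sm, Tm]

lemma fb_rel : ∀ ⦃x y : FreeAlgebra ℤ[X] (Fin 2)⦄, Rel16b x y → fb x = fb y := by
  intro x y r
  cases r with
  | braid =>
      simp only [map_mul, fb, FreeAlgebra.lift_ι_apply, Matrix.cons_val_zero,
        Matrix.cons_val_one, Matrix.head_cons]
      rw [hSTS, hTST]
  | cube1 =>
      simp only [map_pow, fb, FreeAlgebra.lift_ι_apply, Matrix.cons_val_zero,
        AlgHom.commutes, algB_apply]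
      simp [hS3]
  | cube2 =>
      simp only [map_pow, fb, FreeAlgebra.lift_ι_apply, Matrix.cons_val_one,
        Matrix.head_cons, AlgHom.commutes, algB_apply]
      simp [hT3]

def phib : RingQuot Rel16b →ₐ[ℤ[X]] M4 := RingQuot.liftAlgHom ℤ[X] ⟨fb, fb_rel⟩

lemma phib_s1 : phib A0s1 = Sm := by
  rw [A0s1, phib, RingQuot.liftAlgHom_mkAlgHom_apply]
  simp [fb]

lemma phib_s2 : phib A0s2 = Tm := by
  rw [A0s2, phib, RingQuot.liftAlgHom_mkAlgHom_apply]
  simp [fb]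

lemma phib_c : phib A0c = 0 := by
  rw [A0c, AlgHom.commutes, algB_apply]
  simp

lemma part3 : (A0s1 ^ 2 * A0s2 ^ 2) ^ 6 - A0c ^ 8 ≠ 0 := by
  intro h
  have h2 : phib ((A0s1 ^ 2 * A0s2 ^ 2) ^ 6 - A0c ^ 8) = 0 := by rw [h, map_zero]
  have h4 : phib ((A0s1 ^ 2 * A0s2 ^ 2) ^ 6) - phib (A0c ^ 8) = 0 :=
    (map_sub phib _ _).symm.trans h2
  rw [map_pow, map_mul, map_pow, map_pow, map_pow, phib_s1, phib_s2, phib_c,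
    zero_pow (by norm_num : (8:ℕ) ≠ 0), sub_zero] at h4
  have h3 := congrArg (fun m : M4 => m 0 0) h4
  simp only [hq00, Matrix.zero_apply] at h3
  exact pow_ne_zero 6 (MvPolynomial.X_ne_zero (R := ℤ) (s := ())) h3

/-! ## the representation of the generic algebra (part 1) -/

def algA : Algebra P3 M4 :=
  RingHom.toAlgebra' ((Int.castRingHom M4).comp (MvPolynomial.eval (fun _ : Fin 3 => (0:ℤ))))
    (fun c x => (Int.cast_commute _ x).eq)

attribute [local instance] algA

lemma algA_apply (p : P3) :
    algebraMap P3 M4 p = ((MvPolynomial.eval (fun _ : Fin 3 => (0:ℤ)) p : ℤ) : M4) := rfl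

def fa : FreeAlgebra P3 (Fin 2) →ₐ[P3] M4 := FreeAlgebra.lift P3 ![Sm, Tm]

lemma fa_rel : ∀ ⦃x y : FreeAlgebra P3 (Fin 2)⦄, Rel16a x y → fa x = fa y := by
  intro x y r
  cases r with
  | braid =>
      simp only [map_mul, fa, FreeAlgebra.lift_ι_apply, Matrix.cons_val_zero,
        Matrix.cons_val_one, Matrix.head_cons]
      rw [hSTS, hTST]
  | cube1 =>
      simp only [map_pow, map_add, map_mul, fa, FreeAlgebra.lift_ι_apply, Matrix.cons_val_zero,
        AlgHom.commutes, algA_apply]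
      simp [hS3]
  | cube2 =>
      simp only [map_pow, map_add, map_mul, fa, FreeAlgebra.lift_ι_apply, Matrix.cons_val_one,
        Matrix.head_cons, AlgHom.commutes, algA_apply]
      simp [hT3]

def phia : RingQuot Rel16a →ₐ[P3] M4 := RingQuot.liftAlgHom P3 ⟨fa, fa_rel⟩

def As1 : RingQuot Rel16a := RingQuot.mkAlgHom P3 Rel16a (FreeAlgebra.ι P3 0)
def As2 : RingQuot Rel16a := RingQuot.mkAlgHom P3 Rel16a (FreeAlgebra.ι P3 1)

lemma phia_s1 : phia As1 = Sm := by
  rw [As1, phia, RingQuot.liftAlgHom_mkAlgHom_apply]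
  simp [fa]

lemma phia_s2 : phia As2 = Tm := by
  rw [As2, phia, RingQuot.liftAlgHom_mkAlgHom_apply]
  simp [fa]

/-- the "(0,0) matrix entry of the representation" function -/
def theta (x : RingQuot Rel16a) : W := phia x 0 0

lemma theta_pow (n : ℕ) : theta ((As1 ^ 2 * As2 ^ 2) ^ n) = y ^ n := by
  rw [theta, map_pow, map_mul, map_pow, map_pow, phia_s1, phia_s2, hq00]

lemma theta_smul (c : P3) (x : RingQuot Rel16a) :
    theta (c • x) = (MvPolynomial.eval (fun _ : Fin 3 => (0:ℤ)) c : ℤ) • theta x := by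
  rw [theta, theta, map_smul, Algebra.smul_def, algA_apply,
    show ((MvPolynomial.eval (fun _ : Fin 3 => (0:ℤ)) c : ℤ) : M4) * phia x
      = (MvPolynomial.eval (fun _ : Fin 3 => (0:ℤ)) c : ℤ) • phia x from
        (zsmul_eq_mul _ _).symm, Matrix.smul_apply]

lemma part1 : ¬ Module.Finite P3 (RingQuot Rel16a) := by
  intro hfin
  obtain ⟨n, g, hg⟩ := Module.Finite.exists_fin (R := P3) (M := RingQuot Rel16a)
  set B : Submodule ℤ W := Submodule.span ℤ (Set.range fun i => theta (g i)) with hB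
  have hall : ∀ x : RingQuot Rel16a, theta x ∈ B := by
    let SB : Submodule P3 (RingQuot Rel16a) :=
      { carrier := {x | theta x ∈ B}
        zero_mem' := by
          simp only [Set.mem_setOf_eq, theta, map_zero, Matrix.zero_apply]
          exact B.zero_mem
        add_mem' := by
          intro a b ha hb
          simp only [Set.mem_setOf_eq, theta, map_add, Matrix.add_apply] at *
          exact B.add_mem ha hb
        smul_mem' := by
          intro c x hx
          simp only [Set.mem_setOf_eq] at *
          rw [theta_smul]
          exact B.smul_mem _ hx }
    intro x
    have hx : x ∈ SB := by
      rw [show (SB : Submodule P3 (RingQuot Rel16a)) = ⊤ from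
        top_unique (hg ▸ Submodule.span_le.mpr (fun w hw => by
          obtain ⟨i, rfl⟩ := hw
          exact Submodule.subset_span ⟨i, rfl⟩))]
      trivial
    exact hx
  -- every element of B has total degree ≤ D
  set D : ℕ := Finset.univ.sup (fun i : Fin n => (theta (g i)).totalDegree) with hD
  have hdeg : ∀ w ∈ B, w.totalDegree ≤ D := by
    intro w hw
    induction hw using Submodule.span_induction with
    | mem w hw =>
        obtain ⟨i, rfl⟩ := hw
        exact Finset.le_sup (f := fun i : Fin n => (theta (g i)).totalDegree) (Finset.mem_univ i)
    | zero => simp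
    | add a b _ _ ha hb => exact (MvPolynomial.totalDegree_add _ _).trans (max_le ha hb)
    | smul z a _ ha => exact (MvPolynomial.totalDegree_smul_le _ _).trans ha
  have hmem := hall ((As1 ^ 2 * As2 ^ 2) ^ (D + 1))
  rw [theta_pow] at hmem
  have := hdeg _ hmem
  simp only [y] at this
  rw [MvPolynomial.totalDegree_X_pow] at this
  omega

end G4Aux


/-- (1) the ℤ[a,b,c]-algebra with generators s₁, s₂ and relations
s₁s₂s₁ = s₂s₁s₂, sᵢ³ = a·sᵢ² + b·sᵢ + c is not finitely generated as a ℤ[a,b,c]-module;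
(2) in the specialization a = b = 0, the element (s₁²s₂²)⁶ − c⁸ of A₀ is a nonzero
torsion element: it is killed by c but nonzero. -/
theorem G4_generic_hecke_not_finite_and_torsion :
    (¬ Module.Finite P3 (RingQuot Rel16a))
    ∧ A0c * ((A0s1 ^ 2 * A0s2 ^ 2) ^ 6 - A0c ^ 8) = 0
    ∧ (A0s1 ^ 2 * A0s2 ^ 2) ^ 6 - A0c ^ 8 ≠ 0 := by
  exact ⟨G4Aux.part1, Scratch.part2, G4Aux.part3⟩
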